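/- Let k ≥ 1, m ≥ 1, Σ a finite set, Φ ∈ Σ^{k×d}, and T an in-tree on [k]. For each edge e = (a,b) ∈ T let w_e : [k] × Σ → ℝ satisfy |w_e(c,σ)| ≤ m/2 for all c, σ and w_e(c,σ) = 0 whenever c ∉ {a,b}. Define G(a,σ)_b = Σ_{e ∈ path_T(b)} w_e(a,σ). Let q, r ∈ ℝ^k be probability vectors with q_b ≤ k r_b for all b and with r increasing along T toward the root (r_a ≤ r_b for every edge (a,b) ∈ T). Suppose 0 < η ≤ 1/(m k²), let γ = η m k² / 2 and p = (1−γ) r + γ 𝟙/k. Then p is a probability vector, η G(a, Φ_{a,x})_b / p_a ≥ −1 for all a, b, x, and for every x ∈ [d]: (1/η²) Σ_{a=1}^k p_a Ψ_q( η G(a, Φ_{a,x}) / p_a ) ≤ 2 k³ m². -/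

import Mathlib

/-- `Ψ_q(z) = ∑_a q_a (exp(-z_a) + z_a - 1)`. -/
noncomputable def Psi {k : ℕ} (q z : Fin k → ℝ) : ℝ :=
  ∑ a, q a * (Real.exp (-z a) + z a - 1)

/-- A directed in-tree on a finite vertex type `V`: every vertex has a parent
(the root is its own parent) and every vertex reaches the root by iterating
the parent map. -/
structure InTree (V : Type*) [Fintype V] [DecidableEq V] where
  root : V
  par : V → V
  par_root : par root = root
  reaches : ∀ v : V, ∃ n : ℕ, par^[n] v = root

variable {V : Type*} [Fintype V] [DecidableEq V]

/-- The edge set of an in-tree. -/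
def InTree.edges (T : InTree V) : Finset (V × V) :=
  (Finset.univ.filter (fun v => v ≠ T.root)).image (fun v => (v, T.par v))

/-- The depth of a vertex: the number of steps needed to reach the root. -/
def InTree.depth (T : InTree V) (v : V) : ℕ := Nat.find (T.reaches v)

/-- The set of edges on the directed path from `v` to the root. -/
def InTree.path (T : InTree V) (v : V) : Finset (V × V) :=
  (Finset.range (T.depth v)).image (fun i => (T.par^[i] v, T.par^[i + 1] v))

lemma InTree.iterate_depth (T : InTree V) (v : V) : T.par^[T.depth v] v = T.root :=
  Nat.find_spec (T.reaches v)

lemma InTree.ne_root_of_lt_depth (T : InTree V) (v : V) {i : ℕ} (h : i < T.depth v) :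
    T.par^[i] v ≠ T.root := Nat.find_min (T.reaches v) h

lemma InTree.iterate_inj (T : InTree V) (v : V) {i j : ℕ}
    (hi : i ≤ T.depth v) (hj : j ≤ T.depth v) (h : T.par^[i] v = T.par^[j] v) : i = j := by
  by_contra hne
  wlog hij : i < j generalizing i j
  · exact this hj hi h.symm (Ne.symm hne) (by omega)
  have hroot : T.par^[T.depth v - j + i] v = T.root := by
    calc T.par^[T.depth v - j + i] v = T.par^[T.depth v - j] (T.par^[i] v) := by
          rw [← Function.iterate_add_apply]
      _ = T.par^[T.depth v - j] (T.par^[j] v) := by rw [h]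
      _ = T.par^[T.depth v] v := by rw [← Function.iterate_add_apply]; congr 1; omega
      _ = T.root := T.iterate_depth v
  exact T.ne_root_of_lt_depth v (by omega) hroot

lemma InTree.mem_path_iff (T : InTree V) (b : V) (e : V × V) :
    e ∈ T.path b ↔ ∃ i < T.depth b, e = (T.par^[i] b, T.par^[i + 1] b) := by
  simp only [InTree.path, Finset.mem_image, Finset.mem_range, eq_comm]

lemma InTree.step_mem_edges (T : InTree V) (b : V) {i : ℕ} (hi : i < T.depth b) :
    (T.par^[i] b, T.par^[i + 1] b) ∈ T.edges := by
  simp only [InTree.edges, Finset.mem_image, Finset.mem_filter]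
  exact ⟨T.par^[i] b, ⟨Finset.mem_univ _, T.ne_root_of_lt_depth b hi⟩, by
    rw [Function.iterate_succ_apply']⟩

theorem stmt8 (k d m : ℕ) (hk : 1 ≤ k) (hm : 1 ≤ m) (S : Type*) [Fintype S]
    (Φ : Fin k → Fin d → S)
    (T : InTree (Fin k))
    (w : (Fin k × Fin k) → Fin k → S → ℝ)
    (hwb : ∀ e ∈ T.edges, ∀ (c : Fin k) (σ : S), |w e c σ| ≤ (m : ℝ) / 2)
    (hws : ∀ e ∈ T.edges, ∀ (c : Fin k) (σ : S),
      c ≠ e.1 → c ≠ e.2 → w e c σ = 0)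
    (G : Fin k → S → Fin k → ℝ)
    (hG : ∀ (a : Fin k) (σ : S) (b : Fin k), G a σ b = ∑ e ∈ T.path b, w e a σ)
    (q r : Fin k → ℝ)
    (hq0 : ∀ a, 0 ≤ q a) (hq1 : ∑ a, q a = 1)
    (hr0 : ∀ a, 0 ≤ r a) (hr1 : ∑ a, r a = 1)
    (hqr : ∀ b, q b ≤ k * r b)
    (hrT : ∀ e ∈ T.edges, r e.1 ≤ r e.2)
    (η : ℝ) (hη : 0 < η) (hη2 : η ≤ 1 / (m * k ^ 2))
    (γ : ℝ) (hγ : γ = η * m * k ^ 2 / 2)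
    (p : Fin k → ℝ) (hp : ∀ a, p a = (1 - γ) * r a + γ / k) :
    (∀ a, 0 ≤ p a) ∧ (∑ a, p a = 1) ∧
    (∀ (a b : Fin k) (x : Fin d), -1 ≤ η * G a (Φ a x) b / p a) ∧
    (∀ x : Fin d,
      (1 / η ^ 2) * ∑ a, p a * Psi q (fun b => η * G a (Φ a x) b / p a)
        ≤ 2 * k ^ 3 * m ^ 2) := by
  
  have hk1 : (1:ℝ) ≤ (k:ℝ) := by exact_mod_cast hk
  have hm1 : (1:ℝ) ≤ (m:ℝ) := by exact_mod_cast hm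
  have hkpos : (0:ℝ) < k := by linarith
  have hmpos : (0:ℝ) < m := by linarith
  have hmk2 : (0:ℝ) < (m:ℝ) * (k:ℝ) ^ 2 := by positivity
  have hη2' : η * ((m:ℝ) * (k:ℝ) ^ 2) ≤ 1 := by
    rwa [le_div_iff₀ hmk2] at hη2
  have hγpos : 0 < γ := by rw [hγ]; positivity
  have hγle : γ ≤ 1 / 2 := by rw [hγ]; nlinarith
  have hpγ : ∀ a, γ / k ≤ p a := by
    intro a
    have h1 : 0 ≤ (1 - γ) * r a := mul_nonneg (by linarith) (hr0 a)
    rw [hp a]; linarith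
  have hppos : ∀ a, 0 < p a := fun a => lt_of_lt_of_le (by positivity) (hpγ a)
  -- the edge along the path
  have hedge : ∀ (b : Fin k) (i : ℕ), i < T.depth b →
      (T.par^[i] b, T.par^[i + 1] b) ∈ T.edges := fun b i hi => T.step_mem_edges b hi
  -- G as a sum over range
  have hGeq : ∀ (a : Fin k) (σ : S) (b : Fin k),
      G a σ b = ∑ i ∈ Finset.range (T.depth b), w (T.par^[i] b, T.par^[i + 1] b) a σ := by
    intro a σ b
    rw [hG, InTree.path, Finset.sum_image]
    intro i hi j hj hij
    simp only [Finset.mem_coe, Finset.mem_range] at hi hj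
    have := congrArg Prod.fst hij
    exact T.iterate_inj b (le_of_lt hi) (le_of_lt hj) this
  -- bound on |G|
  have hGb : ∀ (a : Fin k) (σ : S) (b : Fin k), |G a σ b| ≤ (m:ℝ) := by
    intro a σ b
    rw [hGeq]
    set D := T.depth b with hD
    set P : ℕ → Prop := fun i => T.par^[i] b = a ∨ T.par^[i + 1] b = a with hP
    have hsplit : ∑ i ∈ Finset.range D, w (T.par^[i] b, T.par^[i + 1] b) a σ
        = ∑ i ∈ (Finset.range D).filter P, w (T.par^[i] b, T.par^[i + 1] b) a σ := by
      rw [Finset.sum_filter_of_ne]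
      intro i hi hne
      simp only [Finset.mem_range] at hi
      by_contra hPi
      exact hne (hws _ (hedge b i hi) a σ
        (fun h => hPi (Or.inl h.symm)) (fun h => hPi (Or.inr h.symm)))
    have hc1 : ((Finset.range D).filter (fun i => T.par^[i] b = a)).card ≤ 1 := by
      rw [Finset.card_le_one]
      intro i hi j hj
      simp only [Finset.mem_filter, Finset.mem_range] at hi hj
      exact T.iterate_inj b (le_of_lt hi.1) (le_of_lt hj.1) (hi.2.trans hj.2.symm)
    have hc2 : ((Finset.range D).filter (fun i => T.par^[i + 1] b = a)).card ≤ 1 := by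
      rw [Finset.card_le_one]
      intro i hi j hj
      simp only [Finset.mem_filter, Finset.mem_range] at hi hj
      have := T.iterate_inj b (Nat.succ_le_of_lt hi.1) (Nat.succ_le_of_lt hj.1)
        (hi.2.trans hj.2.symm)
      omega
    have hsub : (Finset.range D).filter P ⊆
        ((Finset.range D).filter (fun i => T.par^[i] b = a)) ∪
        ((Finset.range D).filter (fun i => T.par^[i + 1] b = a)) := by
      intro i hi
      simp only [Finset.mem_filter, Finset.mem_union, hP] at hi ⊢
      tauto
    have hcard : ((Finset.range D).filter P).card ≤ 2 := by
      calc ((Finset.range D).filter P).card ≤ _ := Finset.card_le_card hsub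
        _ ≤ _ := Finset.card_union_le _ _
        _ ≤ 2 := by omega
    rw [hsplit]
    calc |∑ i ∈ (Finset.range D).filter P, w (T.par^[i] b, T.par^[i + 1] b) a σ|
        ≤ ∑ i ∈ (Finset.range D).filter P, |w (T.par^[i] b, T.par^[i + 1] b) a σ| :=
          Finset.abs_sum_le_sum_abs _ _
      _ ≤ ∑ _i ∈ (Finset.range D).filter P, (m:ℝ) / 2 := by
          apply Finset.sum_le_sum
          intro i hi
          simp only [Finset.mem_filter, Finset.mem_range] at hi
          exact hwb _ (hedge b i hi.1) a σ
      _ = ((Finset.range D).filter P).card * ((m:ℝ) / 2) := by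
          rw [Finset.sum_const, nsmul_eq_mul]
      _ ≤ 2 * ((m:ℝ) / 2) := by
          apply mul_le_mul_of_nonneg_right _ (by positivity)
          exact_mod_cast hcard
      _ = (m:ℝ) := by ring
  -- support of G
  have hGsupp : ∀ (a : Fin k) (σ : S) (b : Fin k), G a σ b ≠ 0 →
      ∃ i ≤ T.depth b, T.par^[i] b = a := by
    intro a σ b hne
    by_contra h
    push_neg at h
    apply hne
    rw [hGeq]
    apply Finset.sum_eq_zero
    intro i hi
    simp only [Finset.mem_range] at hi
    exact hws _ (hedge b i hi) a σ (fun he => h i (le_of_lt hi) he.symm)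
      (fun he => h (i + 1) hi he.symm)
  -- r monotone along paths
  have hrpath : ∀ (b : Fin k) (i : ℕ), i ≤ T.depth b → r b ≤ r (T.par^[i] b) := by
    intro b i
    induction i with
    | zero => simp
    | succ n ih =>
      intro hi
      have hn : n < T.depth b := by omega
      have hstep := hrT _ (hedge b n hn)
      simp only at hstep
      exact le_trans (ih (by omega)) hstep
  -- the key |z| ≤ 1 bound
  have hz : ∀ (a : Fin k) (σ : S) (b : Fin k), |η * G a σ b / p a| ≤ 1 := by
    intro a σ b
    rcases le_or_gt 2 k with h2 | h1
    · have h2' : (2:ℝ) ≤ (k:ℝ) := by exact_mod_cast h2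
      have hkey : η * m ≤ p a := by
        have h1 : η * m ≤ γ / k := by
          rw [hγ, div_div, le_div_iff₀ (by positivity)]
          nlinarith
        exact h1.trans (hpγ a)
      rw [abs_div, abs_mul, abs_of_pos hη, abs_of_pos (hppos a), div_le_one (hppos a)]
      calc η * |G a σ b| ≤ η * m := by
            exact mul_le_mul_of_nonneg_left (hGb a σ b) (le_of_lt hη)
        _ ≤ p a := hkey
    · have hk1' : k = 1 := by omega
      have hall : ∀ x y : Fin k, x = y := by
        intro x y
        have hx := x.isLt
        have hy := y.isLt
        apply Fin.ext
        omega
      have hbroot : b = T.root := hall b T.root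
      have hdepth : T.depth b = 0 := by
        rw [InTree.depth, Nat.find_eq_zero]
        simpa using hbroot
      have : G a σ b = 0 := by rw [hGeq, hdepth]; simp
      rw [this]
      simp
  -- exp inequality
  have hexp : ∀ x : ℝ, |x| ≤ 1 → Real.exp (-x) + x - 1 ≤ x ^ 2 := by
    intro x hx
    have h := Real.abs_exp_sub_one_sub_id_le (x := -x) (by rwa [abs_neg])
    have h2 := le_of_abs_le h
    nlinarith [h2]
  refine ⟨fun a => le_of_lt (hppos a), ?_, ?_, ?_⟩
  · simp only [hp]
    rw [Finset.sum_add_distrib, ← Finset.mul_sum, hr1, Finset.sum_const,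
      Finset.card_univ, Fintype.card_fin, nsmul_eq_mul]
    field_simp
    ring
  · intro a b x
    exact (abs_le.mp (hz a (Φ a x) b)).1
  · intro x
    have step1 : ∀ a, p a * Psi q (fun b => η * G a (Φ a x) b / p a)
        ≤ ∑ b, η ^ 2 * (q b * (G a (Φ a x) b ^ 2 / p a)) := by
      intro a
      unfold Psi
      rw [Finset.mul_sum]
      apply Finset.sum_le_sum
      intro b _
      have hzb := hz a (Φ a x) b
      have h1 := hexp _ hzb
      calc p a * (q b * (Real.exp (-(η * G a (Φ a x) b / p a))
            + η * G a (Φ a x) b / p a - 1))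
          ≤ p a * (q b * (η * G a (Φ a x) b / p a) ^ 2) := by
            apply mul_le_mul_of_nonneg_left _ (le_of_lt (hppos a))
            exact mul_le_mul_of_nonneg_left h1 (hq0 b)
        _ = η ^ 2 * (q b * (G a (Φ a x) b ^ 2 / p a)) := by
            have := (hppos a).ne'
            field_simp
    have step2 : ∀ (a b : Fin k),
        η ^ 2 * (q b * (G a (Φ a x) b ^ 2 / p a)) ≤ η ^ 2 * (2 * k * m ^ 2) := by
      intro a b
      apply mul_le_mul_of_nonneg_left _ (by positivity)
      by_cases hG0 : G a (Φ a x) b = 0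
      · have h0 : q b * (G a (Φ a x) b ^ 2 / p a) = 0 := by rw [hG0]; ring
        rw [h0]
        positivity
      · obtain ⟨i, hi, hia⟩ := hGsupp a (Φ a x) b hG0
        have hra : r b ≤ r a := hia ▸ hrpath b i hi
        rcases eq_or_lt_of_le (hr0 b) with hrb | hrb
        · have hqb : q b = 0 := by
            have h1 := hqr b
            rw [← hrb, mul_zero] at h1
            exact le_antisymm h1 (hq0 b)
          have h0 : q b * (G a (Φ a x) b ^ 2 / p a) = 0 := by rw [hqb]; ring
          rw [h0]
          positivity
        · have hpa2 : r b / 2 ≤ p a := by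
            rw [hp a]
            have h0 : 0 ≤ γ / k := by positivity
            nlinarith [hr0 a]
          have hG2 : G a (Φ a x) b ^ 2 ≤ (m:ℝ) ^ 2 := by
            have h := hGb a (Φ a x) b
            nlinarith [abs_nonneg (G a (Φ a x) b), sq_abs (G a (Φ a x) b)]
          rw [← mul_div_assoc, div_le_iff₀ (hppos a)]
          have h1 : q b * G a (Φ a x) b ^ 2 ≤ ((k:ℝ) * r b) * (m:ℝ) ^ 2 :=
            mul_le_mul (hqr b) hG2 (sq_nonneg _) (by positivity)
          have h2 : r b ≤ 2 * p a := by linarith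
          have h3 : (k:ℝ) * r b * (m:ℝ) ^ 2 ≤ (k:ℝ) * (2 * p a) * (m:ℝ) ^ 2 := by
            apply mul_le_mul_of_nonneg_right _ (by positivity)
            exact mul_le_mul_of_nonneg_left h2 (le_of_lt hkpos)
          have h4 : (k:ℝ) * (2 * p a) * (m:ℝ) ^ 2 = 2 * (k:ℝ) * (m:ℝ) ^ 2 * p a := by ring
          linarith [h1, h3, h4]
    rw [one_div, inv_mul_le_iff₀ (by positivity : (0:ℝ) < η ^ 2)]
    calc ∑ a, p a * Psi q (fun b => η * G a (Φ a x) b / p a)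
        ≤ ∑ a : Fin k, ∑ b : Fin k, η ^ 2 * (q b * (G a (Φ a x) b ^ 2 / p a)) :=
          Finset.sum_le_sum fun a _ => step1 a
      _ ≤ ∑ _a : Fin k, ∑ _b : Fin k, η ^ 2 * (2 * k * m ^ 2) :=
          Finset.sum_le_sum fun a _ => Finset.sum_le_sum fun b _ => step2 a b
      _ = η ^ 2 * (2 * (k:ℝ) ^ 3 * (m:ℝ) ^ 2) := by
          simp only [Finset.sum_const, Finset.card_univ, Fintype.card_fin, nsmul_eq_mul]
          ring
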